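/- arXiv:1910.12518 — 2 statements merged into one kernel-verified Lean document; each statement's English description precedes it below -/
import Mathlib

section
/- For 0 < q < 1, positive integer n, and real ε with 0 < ε ≤ 1, any two distinct points x₁, x₂ of the set E_n(ε) = {q^{k/n} : k ∈ ℕ, q^{k/n} ≥ ε} satisfy |x₁ - x₂| ≥ (1-q)ε/n. -/
lemma one_sub_pow_le_n_mul (t : ℝ) (ht0 : 0 ≤ t) (ht1 : t ≤ 1) (n : ℕ) :
    1 - t ^ n ≤ n * (1 - t) := by
  have hsum : (∑ i ∈ Finset.range n, t ^ i) ≤ n := by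
    calc (∑ i ∈ Finset.range n, t ^ i) ≤ ∑ i ∈ Finset.range n, (1:ℝ) :=
          Finset.sum_le_sum fun i _ => pow_le_one₀ ht0 ht1
      _ = n := by simp
  calc 1 - t ^ n = (∑ i ∈ Finset.range n, t ^ i) * (1 - t) := (geom_sum_mul_neg t n).symm
    _ ≤ n * (1 - t) := by
        apply mul_le_mul_of_nonneg_right hsum (by linarith)

lemma key_gap (q : ℝ) (hq0 : 0 < q) (hq1 : q < 1) (n : ℕ) (hn : 0 < n)
    (ε : ℝ) (hε0 : 0 < ε)
    (k₁ k₂ : ℕ) (hk : k₁ < k₂) (hε : ε ≤ q ^ ((k₁ : ℝ) / n)) :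
    (1 - q) * ε / n ≤ q ^ ((k₁ : ℝ) / n) - q ^ ((k₂ : ℝ) / n) := by
  set t : ℝ := q ^ ((1 : ℝ) / n) with ht
  have hnR : (0:ℝ) < n := Nat.cast_pos.mpr hn
  have ht0 : 0 < t := Real.rpow_pos_of_pos hq0 _
  have htn : t ^ n = q := by
    rw [ht, ← Real.rpow_natCast (q ^ ((1:ℝ)/n)) n, ← Real.rpow_mul hq0.le]
    rw [one_div_mul_cancel (ne_of_gt hnR), Real.rpow_one]
  have ht1 : t < 1 := by
    by_contra h
    push_neg at h
    have : (1:ℝ) ≤ t ^ n := one_le_pow₀ h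
    rw [htn] at this; linarith
  -- 1 - t ≥ (1-q)/n
  have hkey : (1 - q) / n ≤ 1 - t := by
    have := one_sub_pow_le_n_mul t ht0.le ht1.le n
    rw [htn] at this
    rw [div_le_iff₀ hnR]; linarith
  -- q^(k₂/n) ≤ q^(k₁/n) * t
  have hle : q ^ ((k₂ : ℝ) / n) ≤ q ^ ((k₁ : ℝ) / n) * t := by
    rw [ht, ← Real.rpow_add hq0]
    apply Real.rpow_le_rpow_of_exponent_ge hq0 hq1.le
    rw [← add_div, div_le_div_iff_of_pos_right hnR]
    have : (k₁ : ℝ) + 1 ≤ k₂ := by exact_mod_cast hk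
    linarith
  have hx1 : ε ≤ q ^ ((k₁ : ℝ) / n) := hε
  have h1t : 0 ≤ 1 - t := by linarith
  calc (1 - q) * ε / n = ε * ((1 - q) / n) := by ring
    _ ≤ q ^ ((k₁ : ℝ) / n) * (1 - t) := by
        apply mul_le_mul hx1 hkey (div_nonneg (by linarith) hnR.le) (Real.rpow_nonneg hq0.le _)
    _ = q ^ ((k₁ : ℝ) / n) - q ^ ((k₁ : ℝ) / n) * t := by ring
    _ ≤ q ^ ((k₁ : ℝ) / n) - q ^ ((k₂ : ℝ) / n) := by linarith

theorem stmt_1 (q : ℝ) (hq0 : 0 < q) (hq1 : q < 1) (n : ℕ) (hn : 0 < n)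
    (ε : ℝ) (hε0 : 0 < ε) (hε1 : ε ≤ 1)
    (x₁ x₂ : ℝ)
    (hx₁ : x₁ ∈ {x : ℝ | ∃ k : ℕ, x = q ^ ((k : ℝ) / n) ∧ ε ≤ x})
    (hx₂ : x₂ ∈ {x : ℝ | ∃ k : ℕ, x = q ^ ((k : ℝ) / n) ∧ ε ≤ x})
    (hne : x₁ ≠ x₂) :
    |x₁ - x₂| ≥ (1 - q) * ε / n := by
  obtain ⟨k₁, h1, hε1'⟩ := hx₁
  obtain ⟨k₂, h2, hε2'⟩ := hx₂
  have hnR : (0:ℝ) < n := Nat.cast_pos.mpr hn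
  have hkne : k₁ ≠ k₂ := by
    rintro rfl; exact hne (h1.trans h2.symm)
  have hpos : 0 < (1 - q) * ε / n := by
    apply div_pos (mul_pos (by linarith) hε0) hnR
  rcases lt_or_gt_of_ne hkne with h | h
  · have := key_gap q hq0 hq1 n hn ε hε0 k₁ k₂ h (h1 ▸ hε1')
    rw [h1, h2, abs_of_nonneg (by linarith [hε0])]
    linarith
  · have := key_gap q hq0 hq1 n hn ε hε0 k₂ k₁ h (h2 ▸ hε2')
    rw [h1, h2, abs_sub_comm, abs_of_nonneg (by linarith [hε0])]
    linarith
end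

section
/- Let 0 < q < 1 and c < 0. Then lim_{n→∞} (1/n²) · log ∏_{j=0}^∞ (1 + q^{nc+j}) = -(c²/2) · log q. -/
open Filter Finset

private lemma aux_sum_range_cast (m : ℕ) :
    ∑ j ∈ range m, (j : ℝ) = (m : ℝ) * ((m : ℝ) - 1) / 2 := by
  induction m with
  | zero => simp
  | succ k ih => rw [sum_range_succ, ih]; push_cast; ring

theorem stmt_7 (q : ℝ) (hq0 : 0 < q) (hq1 : q < 1) (c : ℝ) (hc : c < 0) :
    Filter.Tendsto
      (fun n : ℕ =>
        (1 / (n : ℝ) ^ 2) * Real.log (∏' j : ℕ, (1 + q ^ ((n : ℝ) * c + (j : ℝ)))))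
      Filter.atTop (nhds (-(c ^ 2 / 2) * Real.log q)) := by
  have hpos : ∀ x : ℝ, (0 : ℝ) < q ^ x := fun x => Real.rpow_pos_of_pos hq0 x
  set f : ℕ → ℕ → ℝ := fun n j => Real.log (1 + q ^ ((n : ℝ) * c + (j : ℝ))) with hfdef
  have hfpos : ∀ n j : ℕ, (0 : ℝ) < 1 + q ^ ((n : ℝ) * c + (j : ℝ)) := by
    intro n j; have := hpos ((n : ℝ) * c + j); linarith
  have hfnonneg : ∀ n j, 0 ≤ f n j := by
    intro n j
    exact Real.log_nonneg (by have := (hpos ((n : ℝ) * c + j)).le; linarith)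
  have hgeom : Summable fun j : ℕ => q ^ j := summable_geometric_of_lt_one hq0.le hq1
  have hfle : ∀ n j : ℕ, f n j ≤ q ^ ((n : ℝ) * c) * q ^ j := by
    intro n j
    calc f n j ≤ (1 + q ^ ((n : ℝ) * c + (j : ℝ))) - 1 :=
          Real.log_le_sub_one_of_pos (hfpos n j)
      _ = q ^ ((n : ℝ) * c + (j : ℝ)) := by ring
      _ = q ^ ((n : ℝ) * c) * q ^ j := by
          rw [Real.rpow_add hq0, Real.rpow_natCast]
  have hsummable : ∀ n, Summable (f n) :=
    fun n => Summable.of_nonneg_of_le (hfnonneg n) (hfle n) (hgeom.mul_left _)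
  -- log of the infinite product equals the infinite sum of logs
  have hlog : ∀ n : ℕ,
      Real.log (∏' j : ℕ, (1 + q ^ ((n : ℝ) * c + (j : ℝ)))) = ∑' j, f n j := by
    intro n
    have h2 := Real.rexp_tsum_eq_tprod (f := fun (j : ℕ) => 1 + q ^ ((n : ℝ) * c + (j : ℝ)))
      (hfpos n) (hsummable n)
    rw [← h2, Real.log_exp]
  -- the cutoff
  set m : ℕ → ℕ := fun n => ⌈(n : ℝ) * (-c)⌉₊ with hmdef
  have hm1 : ∀ n : ℕ, (n : ℝ) * (-c) ≤ m n := fun n => Nat.le_ceil _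
  have hm2 : ∀ n : ℕ, (m n : ℝ) < (n : ℝ) * (-c) + 1 := fun n =>
    Nat.ceil_lt_add_one (mul_nonneg (Nat.cast_nonneg n) (by linarith))
  have hexp_nonpos : ∀ n : ℕ, ∀ j ∈ range (m n), (n : ℝ) * c + (j : ℝ) ≤ 0 := by
    intro n j hj
    have hj' : (j : ℝ) + 1 ≤ (m n : ℝ) := by
      exact_mod_cast Nat.succ_le_of_lt (mem_range.1 hj)
    have := hm2 n; nlinarith
  set S : ℕ → ℝ := fun n => ∑ j ∈ range (m n), (((n : ℝ) * c + (j : ℝ)) * Real.log q)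
    with hSdef
  -- lower bound
  have hlow : ∀ n, S n ≤ ∑' j, f n j := by
    intro n
    calc S n ≤ ∑ j ∈ range (m n), f n j := by
          apply Finset.sum_le_sum
          intro j hj
          have h1 : ((n : ℝ) * c + (j : ℝ)) * Real.log q
              = Real.log (q ^ ((n : ℝ) * c + (j : ℝ))) :=
            (Real.log_rpow hq0 _).symm
          rw [h1]
          exact Real.log_le_log (hpos _) (by linarith)
      _ ≤ ∑' j, f n j := Summable.sum_le_tsum _ (fun j _ => hfnonneg n j) (hsummable n)
  -- upper bound
  have hupp : ∀ n, ∑' j, f n j ≤ S n + (m n : ℝ) * Real.log 2 + (1 - q)⁻¹ := by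
    intro n
    rw [← Summable.sum_add_tsum_nat_add (m n) (hsummable n)]
    have h1 : ∑ j ∈ range (m n), f n j ≤ S n + (m n : ℝ) * Real.log 2 := by
      have hterm : ∀ j ∈ range (m n),
          f n j ≤ ((n : ℝ) * c + (j : ℝ)) * Real.log q + Real.log 2 := by
        intro j hj
        have haj := hexp_nonpos n j hj
        have h1q : 1 ≤ q ^ ((n : ℝ) * c + (j : ℝ)) :=
          Real.one_le_rpow_of_pos_of_le_one_of_nonpos hq0 hq1.le haj
        have h2q : 1 + q ^ ((n : ℝ) * c + (j : ℝ)) ≤ 2 * q ^ ((n : ℝ) * c + (j : ℝ)) := by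
          linarith
        calc f n j ≤ Real.log (2 * q ^ ((n : ℝ) * c + (j : ℝ))) :=
              Real.log_le_log (hfpos n j) h2q
          _ = Real.log 2 + ((n : ℝ) * c + (j : ℝ)) * Real.log q := by
              rw [Real.log_mul two_ne_zero (hpos _).ne', Real.log_rpow hq0]
          _ = ((n : ℝ) * c + (j : ℝ)) * Real.log q + Real.log 2 := by ring
      calc ∑ j ∈ range (m n), f n j
          ≤ ∑ j ∈ range (m n), (((n : ℝ) * c + (j : ℝ)) * Real.log q + Real.log 2) :=
            Finset.sum_le_sum hterm
        _ = S n + (m n : ℝ) * Real.log 2 := by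
            rw [Finset.sum_add_distrib, Finset.sum_const, card_range, nsmul_eq_mul]
    have h2 : (∑' k : ℕ, f n (k + m n)) ≤ (1 - q)⁻¹ := by
      have hsum2 : Summable fun k => f n (k + m n) :=
        (summable_nat_add_iff (m n)).2 (hsummable n)
      have hterm : ∀ k : ℕ, f n (k + m n) ≤ q ^ k := by
        intro k
        have hcast : ((k + m n : ℕ) : ℝ) = (k : ℝ) + (m n : ℝ) := by push_cast; ring
        have hle1 : q ^ ((n : ℝ) * c + (m n : ℝ)) ≤ 1 :=
          Real.rpow_le_one hq0.le hq1.le (by have := hm1 n; linarith)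
        calc f n (k + m n)
            ≤ q ^ ((n : ℝ) * c + ((k + m n : ℕ) : ℝ)) := by
              have := Real.log_le_sub_one_of_pos (hfpos n (k + m n)); linarith
          _ = q ^ ((n : ℝ) * c + (m n : ℝ)) * q ^ k := by
              rw [hcast, show (n : ℝ) * c + ((k : ℝ) + (m n : ℝ))
                    = ((n : ℝ) * c + (m n : ℝ)) + (k : ℝ) by ring,
                Real.rpow_add hq0, Real.rpow_natCast]
          _ ≤ 1 * q ^ k := by
              have : (0:ℝ) < q ^ k := pow_pos hq0 k
              nlinarith
          _ = q ^ k := one_mul _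
      calc (∑' k : ℕ, f n (k + m n)) ≤ ∑' k : ℕ, q ^ k :=
            Summable.tsum_le_tsum hterm hsum2 hgeom
        _ = (1 - q)⁻¹ := tsum_geometric_of_lt_one hq0.le hq1
    linarith
  -- limits
  set r : ℕ → ℝ := fun n => (m n : ℝ) / n with hrdef
  have h1n : Tendsto (fun n : ℕ => 1 / (n : ℝ)) atTop (nhds 0) :=
    tendsto_one_div_atTop_nhds_zero_nat
  have hr : Tendsto r atTop (nhds (-c)) := by
    apply tendsto_of_tendsto_of_tendsto_of_le_of_le'
      (tendsto_const_nhds (x := -c))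
      (by simpa using (tendsto_const_nhds (x := -c)).add h1n)
    · filter_upwards [eventually_ge_atTop 1] with n hn
      have hn' : (0 : ℝ) < n := by exact_mod_cast hn
      rw [hrdef]
      rw [le_div_iff₀ hn']
      have := hm1 n; linarith
    · filter_upwards [eventually_ge_atTop 1] with n hn
      have hn' : (0 : ℝ) < n := by exact_mod_cast hn
      rw [hrdef]
      rw [div_le_iff₀ hn']
      have h := (hm2 n).le
      have he : (-c + ((n : ℝ))⁻¹) * n = (n : ℝ) * (-c) + 1 := by
        rw [add_mul, inv_mul_cancel₀ hn'.ne']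
        ring
      linarith
  -- closed form for S
  have hSform : ∀ n, S n =
      ((m n : ℝ) * ((n : ℝ) * c) + (m n : ℝ) * ((m n : ℝ) - 1) / 2) * Real.log q := by
    intro n
    rw [hSdef]
    simp only
    rw [← Finset.sum_mul]
    congr 1
    rw [Finset.sum_add_distrib, Finset.sum_const, card_range, nsmul_eq_mul,
      aux_sum_range_cast]
  set L : ℝ := -(c ^ 2 / 2) * Real.log q with hLdef
  have hlowlim : Tendsto (fun n : ℕ => (1 / (n : ℝ) ^ 2) * S n) atTop (nhds L) := by
    have heq : ∀ᶠ n : ℕ in atTop, Real.log q *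
        (c * r n + r n * r n / 2 - r n * (1 / (n : ℝ)) / 2)
        = (1 / (n : ℝ) ^ 2) * S n := by
      filter_upwards [eventually_ge_atTop 1] with n hn
      have hn' : (n : ℝ) ≠ 0 := by positivity
      rw [hSform n, hrdef]
      field_simp
      ring
    apply Tendsto.congr' heq
    have hT : Tendsto (fun n : ℕ => c * r n + r n * r n / 2 - r n * (1 / (n : ℝ)) / 2)
        atTop (nhds (c * (-c) + (-c) * (-c) / 2 - (-c) * 0 / 2)) :=
      ((hr.const_mul c).add ((hr.mul hr).div_const 2)).sub ((hr.mul h1n).div_const 2)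
    have := hT.const_mul (Real.log q)
    convert this using 2
    rw [hLdef]; ring
  have hupplim : Tendsto
      (fun n : ℕ => (1 / (n : ℝ) ^ 2) * (S n + (m n : ℝ) * Real.log 2 + (1 - q)⁻¹))
      atTop (nhds L) := by
    have heq : ∀ᶠ n : ℕ in atTop,
        (1 / (n : ℝ) ^ 2) * S n + (r n * (1 / (n : ℝ))) * Real.log 2
          + (1 - q)⁻¹ * ((1 / (n : ℝ)) * (1 / (n : ℝ)))
        = (1 / (n : ℝ) ^ 2) * (S n + (m n : ℝ) * Real.log 2 + (1 - q)⁻¹) := by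
      filter_upwards [eventually_ge_atTop 1] with n hn
      have hn' : (n : ℝ) ≠ 0 := by positivity
      have hq' : (1 : ℝ) - q ≠ 0 := by linarith
      rw [hrdef]
      field_simp
    apply Tendsto.congr' heq
    have hT := (hlowlim.add (((hr.mul h1n).mul_const (Real.log 2)))).add
      ((h1n.mul h1n).const_mul ((1 - q)⁻¹))
    convert hT using 2
    ring
  -- squeeze
  apply tendsto_of_tendsto_of_tendsto_of_le_of_le' hlowlim hupplim
  · filter_upwards [eventually_ge_atTop 1] with n hn
    rw [hlog n]
    have hsq : (0 : ℝ) ≤ 1 / (n : ℝ) ^ 2 := by positivity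
    exact mul_le_mul_of_nonneg_left (hlow n) hsq
  · filter_upwards [eventually_ge_atTop 1] with n hn
    rw [hlog n]
    have hsq : (0 : ℝ) ≤ 1 / (n : ℝ) ^ 2 := by positivity
    calc (1 / (n : ℝ) ^ 2) * (∑' j, f n j)
        ≤ (1 / (n : ℝ) ^ 2) * (S n + (m n : ℝ) * Real.log 2 + (1 - q)⁻¹) :=
          mul_le_mul_of_nonneg_left (hupp n) hsq
end
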